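/- The multi-ratio is invariant under central projection: if π_U is the central projection from a projective subspace U of CP^d onto a complementary subspace V, and U does not meet any of the lines p_i p_{i+1}, then mr(π_U(p_1), π_U(p_{1,2}), …, π_U(p_{m,1})) = mr(p_1, p_{1,2}, …, p_{m,1}). -/

import Mathlib

private lemma key_ratio {V : Type*} [AddCommGroup V] [Module ℂ V]
    (x y : V) (a b fx fy r : ℂ)
    (hfx : fx ≠ 0) (hfy : fy ≠ 0) (hfw : a * fx + b * fy ≠ 0)
    (hden : (a * fx + b * fy)⁻¹ • (a • x + b • y) - fy⁻¹ • y ≠ 0)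
    (hr : fx⁻¹ • x - (a * fx + b * fy)⁻¹ • (a • x + b • y)
        = r • ((a * fx + b * fy)⁻¹ • (a • x + b • y) - fy⁻¹ • y)) :
    r = b * fy / (a * fx) := by
  have ha : a ≠ 0 := by
    rintro rfl
    have hb : b ≠ 0 := by
      intro hb; exact hfw (by simp [hb])
    exact hden (by match_scalars <;> field_simp <;> ring)
  have hAB : fx⁻¹ • x - (a * fx + b * fy)⁻¹ • (a • x + b • y)
      = (b * fy / (a * fx)) • ((a * fx + b * fy)⁻¹ • (a • x + b • y) - fy⁻¹ • y) := by
    have hfw' : fx * a + b * fy ≠ 0 := by rwa [mul_comm fx a]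
    match_scalars <;> field_simp <;> ring
  have h0 : (r - b * fy / (a * fx)) •
      ((a * fx + b * fy)⁻¹ • (a • x + b • y) - fy⁻¹ • y) = 0 := by
    rw [sub_smul, ← hr, hAB, sub_self]
  rcases smul_eq_zero.mp h0 with h | h
  · exact sub_eq_zero.mp h
  · exact absurd h hden

private lemma prod_shift_ratio (m : ℕ) [NeZero m] (a b x : Fin m → ℂ)
    (hx : ∀ i, x i ≠ 0) :
    ∏ i, b i * x (i + 1) / (a i * x i) = ∏ i, b i / a i := by
  rw [Finset.prod_div_distrib, Finset.prod_div_distrib,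
    Finset.prod_mul_distrib, Finset.prod_mul_distrib]
  have hshift : ∏ i, x (i + 1) = ∏ i, x i :=
    Fintype.prod_equiv (Equiv.addRight (1 : Fin m)) _ _ (fun i => rfl)
  rw [hshift, mul_div_mul_right _ _ (Finset.prod_ne_zero_iff.mpr fun i _ => hx i)]

theorem multi_ratio_central_projection_invariant (d rk m : ℕ) [NeZero m]
    (v w : Fin m → (Fin (d + 1) → ℂ))
    (α β : Fin m → ℂ)
    (hw : ∀ i, w i = α i • v i + β i • v (i + 1))
    (π : (Fin (d + 1) → ℂ) →ₗ[ℂ] (Fin (rk + 1) → ℂ))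
    (hcenter : ∀ i, ∀ x ∈ Submodule.span ℂ ({v i, v (i + 1)} : Set (Fin (d + 1) → ℂ)),
        π x = 0 → x = 0)
    (φ : (Fin (d + 1) → ℂ) →ₗ[ℂ] ℂ) (ψ : (Fin (rk + 1) → ℂ) →ₗ[ℂ] ℂ)
    (hφv : ∀ i, φ (v i) ≠ 0) (hφw : ∀ i, φ (w i) ≠ 0)
    (hψv : ∀ i, ψ (π (v i)) ≠ 0) (hψw : ∀ i, ψ (π (w i)) ≠ 0)
    (r s : Fin m → ℂ)
    (hrden : ∀ i, (φ (w i))⁻¹ • w i - (φ (v (i + 1)))⁻¹ • v (i + 1) ≠ 0)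
    (hsden : ∀ i, (ψ (π (w i)))⁻¹ • π (w i)
        - (ψ (π (v (i + 1))))⁻¹ • π (v (i + 1)) ≠ 0)
    (hr : ∀ i, (φ (v i))⁻¹ • v i - (φ (w i))⁻¹ • w i
        = r i • ((φ (w i))⁻¹ • w i - (φ (v (i + 1)))⁻¹ • v (i + 1)))
    (hs : ∀ i, (ψ (π (v i)))⁻¹ • π (v i) - (ψ (π (w i)))⁻¹ • π (w i)
        = s i • ((ψ (π (w i)))⁻¹ • π (w i)
            - (ψ (π (v (i + 1))))⁻¹ • π (v (i + 1)))) :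
    ∏ i, r i = ∏ i, s i := by
  have hφw' : ∀ i, φ (w i) = α i * φ (v i) + β i * φ (v (i + 1)) := by
    intro i; rw [hw i]; simp
  have hψw' : ∀ i, ψ (π (w i)) = α i * ψ (π (v i)) + β i * ψ (π (v (i + 1))) := by
    intro i; rw [hw i]; simp
  have hπw : ∀ i, π (w i) = α i • π (v i) + β i • π (v (i + 1)) := by
    intro i; rw [hw i]; simp
  have hrval : ∀ i, r i = β i * φ (v (i + 1)) / (α i * φ (v i)) := by
    intro i
    refine key_ratio (v i) (v (i + 1)) (α i) (β i) _ _ (r i)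
      (hφv i) (hφv (i + 1)) ?_ ?_ ?_
    · rw [← hφw' i]; exact hφw i
    · rw [← hφw' i, ← hw i]; exact hrden i
    · rw [← hφw' i, ← hw i]; exact hr i
  have hsval : ∀ i, s i = β i * ψ (π (v (i + 1))) / (α i * ψ (π (v i))) := by
    intro i
    refine key_ratio (π (v i)) (π (v (i + 1))) (α i) (β i) _ _ (s i)
      (hψv i) (hψv (i + 1)) ?_ ?_ ?_
    · rw [← hψw' i]; exact hψw i
    · rw [← hψw' i, ← hπw i]; exact hsden i
    · rw [← hψw' i, ← hπw i]; exact hs i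
  calc ∏ i, r i = ∏ i, β i * φ (v (i + 1)) / (α i * φ (v i)) := by
        exact Finset.prod_congr rfl fun i _ => hrval i
    _ = ∏ i, β i / α i := prod_shift_ratio m α β _ hφv
    _ = ∏ i, β i * ψ (π (v (i + 1))) / (α i * ψ (π (v i))) :=
        (prod_shift_ratio m α β _ hψv).symm
    _ = ∏ i, s i := Finset.prod_congr rfl fun i _ => (hsval i).symm
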